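/- Let (Ω, F) be a measurable space and V an upper probability on (Ω, F). Then for every sequence (A_n)_{n≥1} of pairwise disjoint sets in F, one has lim_{n→∞} V(A_n) = 0. -/
import Mathlib


open MeasureTheory Set Filter Topology ENNReal NNReal

variable {Ω : Type*}

/-- The core of a set function `V` : all countably additive probability measures dominated
by `V` on measurable sets. -/
def UpperCore [MeasurableSpace Ω] (V : Set Ω → ℝ) : Set (Measure Ω) :=
  {P | IsProbabilityMeasure P ∧ ∀ A : Set Ω, MeasurableSet A → (P A).toReal ≤ V A}

/-- `V` is an upper probability: monotone, normalized, attained as the sup over its core,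
and continuous at `∅` along decreasing sequences. -/
def IsUpperProb [MeasurableSpace Ω] (V : Set Ω → ℝ) : Prop :=
  (∀ A B : Set Ω, MeasurableSet A → MeasurableSet B → A ⊆ B → V A ≤ V B) ∧
  V (∅ : Set Ω) = 0 ∧ V (univ : Set Ω) = 1 ∧
  (∀ A : Set Ω, MeasurableSet A →
    V A = sSup ((fun P : Measure Ω => (P A).toReal) '' UpperCore V)) ∧
  (∀ A : ℕ → Set Ω, (∀ n, MeasurableSet (A n)) → (∀ n, A (n + 1) ⊆ A n) →
    (⋂ n, A n) = ∅ → Tendsto (fun n => V (A n)) atTop (𝓝 0))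

/-- A `T`-invariant measurable set. -/
def InvSet [MeasurableSpace Ω] (T : Ω → Ω) (A : Set Ω) : Prop :=
  MeasurableSet A ∧ T ⁻¹' A = A

/-- A `T`-invariant probability measure (an element of `M(T)`). -/
def InvProb [MeasurableSpace Ω] (T : Ω → Ω) (P : Measure Ω) : Prop :=
  IsProbabilityMeasure P ∧ ∀ A : Set Ω, MeasurableSet A → P (T ⁻¹' A) = P A

/-- An ergodic `T`-invariant probability measure (an element of `M^e(T)`). -/
def ErgProb [MeasurableSpace Ω] (T : Ω → Ω) (P : Measure Ω) : Prop :=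
  InvProb T P ∧ ∀ A : Set Ω, InvSet T A → P A = 0 ∨ P A = 1

/-- The set function `V_i(A) = sup {P(A) : P ∈ core(V), P(Ai) = 1}`
(the sup over the empty set being `0`). -/
noncomputable def CompV [MeasurableSpace Ω] (V : Set Ω → ℝ) (Ai : Set Ω) :
    Set Ω → ℝ :=
  fun A => sSup ((fun P : Measure Ω => (P A).toReal) '' {P ∈ UpperCore V | P Ai = 1})

/-- `V` is of finite ergodic components with respect to `T`. -/
def IsFEC [MeasurableSpace Ω] (V : Set Ω → ℝ) (T : Ω → Ω) : Prop :=
  ∃ (n : ℕ) (A : Fin n → Set Ω),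
    (∀ i, InvSet T (A i)) ∧
    (univ : Set Ω) = ⋃ i, A i ∧
    (∀ i j, i ≠ j → Disjoint (A i) (A j)) ∧
    ∀ i, IsUpperProb (CompV V (A i)) ∧
      ∀ B : Set Ω, InvSet T B → CompV V (A i) B = 0 ∨ CompV V (A i) Bᶜ = 0

/-- `Q` is an extreme point of the set `S` of measures. -/
def IsExtremePt [MeasurableSpace Ω] (S : Set (Measure Ω)) (Q : Measure Ω) : Prop :=
  Q ∈ S ∧ ∀ P₁ ∈ S, ∀ P₂ ∈ S, ∀ a : ℝ≥0∞, 0 < a → a < 1 →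
    Q = a • P₁ + (1 - a) • P₂ → P₁ = Q ∧ P₂ = Q

/-- For an upper probability `V`, along any sequence of pairwise disjoint
measurable sets, `V (A n) → 0`. -/
theorem stmt_0 [MeasurableSpace Ω] (V : Set Ω → ℝ) (hV : IsUpperProb V)
    (A : ℕ → Set Ω) (hA : ∀ n, MeasurableSet (A n))
    (hdisj : ∀ m n, m ≠ n → Disjoint (A m) (A n)) :
    Tendsto (fun n => V (A n)) atTop (𝓝 0) := by
  obtain ⟨hmono, hempty, -, -, hcont⟩ := hV
  set B : ℕ → Set Ω := fun n => ⋃ k, A (n + k) with hB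
  have hBmeas : ∀ n, MeasurableSet (B n) := fun n => MeasurableSet.iUnion fun k => hA _
  have hBdec : ∀ n, B (n + 1) ⊆ B n := by
    intro n x hx
    obtain ⟨k, hk⟩ := mem_iUnion.1 hx
    exact mem_iUnion.2 ⟨k + 1, by rwa [show n + (k + 1) = n + 1 + k by omega]⟩
  have hBempty : (⋂ n, B n) = ∅ := by
    ext x
    simp only [mem_iInter, mem_empty_iff_false, iff_false]
    intro hx
    obtain ⟨k, hk⟩ := mem_iUnion.1 (hx 0)
    obtain ⟨j, hj⟩ := mem_iUnion.1 (hx (k + 1))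
    exact (hdisj (0 + k) (k + 1 + j) (by omega)).ne_of_mem hk hj rfl
  have hlim := hcont B hBmeas hBdec hBempty
  have h0 : ∀ n, 0 ≤ V (A n) := fun n => hempty ▸ hmono ∅ (A n) .empty (hA n) (empty_subset _)
  have hle : ∀ n, V (A n) ≤ V (B n) := fun n =>
    hmono (A n) (B n) (hA n) (hBmeas n) (by intro x hx; exact mem_iUnion.2 ⟨0, by simpa using hx⟩)
  exact squeeze_zero h0 hle hlim
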